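/- Let J satisfy hypothesis (H₀), let Ψ ∈ Γ_{p,q} with p ≥ q > 1 and ψ = Ψ', and assume δ := inf_{s>0} ψ(s)/γ⁺_ψ(s) > 0. Let A, G : ℝ → ℝ be continuously differentiable functions with G'(s) ≥ Ψ(A'(s)) for all s ∈ ℝ. Then for every measurable u : ℝ^N → ℝ the (possibly infinite) quantities satisfy the generalized Stroock–Varopoulos inequality ℰ(u; G∘u) ≥ (δq/p) · E(A∘u). -/

import Mathlib

open MeasureTheory Set Filter

noncomputable section

/-- Hypothesis (H₀) on the kernel `J`. -/
def kernelH0 (N : ℕ) (J : EuclideanSpace ℝ (Fin N) → ℝ) (q₀ : ℝ) : Prop :=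
  Measurable J ∧ (∀ z : EuclideanSpace ℝ (Fin N), z ≠ 0 → 0 < J z) ∧
    (∀ z : EuclideanSpace ℝ (Fin N), J (-z) = J z) ∧
    (∫⁻ z in {z : EuclideanSpace ℝ (Fin N) | ‖z‖ < 1}, ENNReal.ofReal (J z)) = ⊤ ∧
    0 < q₀ ∧
    (∫⁻ z : EuclideanSpace ℝ (Fin N), ENNReal.ofReal (min 1 (‖z‖ ^ q₀) * J z)) < ⊤

/-- The class `Γ_{p,q}` of Young functions. -/
def memGamma (Ψ : ℝ → ℝ) (p q : ℝ) : Prop :=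
  ConvexOn ℝ Set.univ Ψ ∧ (∀ s, Ψ (-s) = Ψ s) ∧ ContDiff ℝ 1 Ψ ∧
    (∀ s, 0 ≤ Ψ s) ∧ Ψ 0 = 0 ∧ Ψ 1 = 1 ∧
    (∀ s : ℝ, s ≠ 0 → q ≤ s * deriv Ψ s / Ψ s ∧ s * deriv Ψ s / Ψ s ≤ p)

/-- `F(u) = ∫ Ψ(u)`. -/
def funcF (N : ℕ) (Ψ : ℝ → ℝ) (u : EuclideanSpace ℝ (Fin N) → ℝ) : ENNReal :=
  ∫⁻ x, ENNReal.ofReal (Ψ (u x))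

/-- `F(|∇u|) = ∫ Ψ(|∇u|)`. -/
def funcFgrad (N : ℕ) (Ψ : ℝ → ℝ) (u : EuclideanSpace ℝ (Fin N) → ℝ) : ENNReal :=
  ∫⁻ x, ENNReal.ofReal (Ψ ‖fderiv ℝ u x‖)

/-- `E(u) = (1/2) ∬ Ψ(u(x)-u(y)) J(x-y)`. -/
def funcE (N : ℕ) (Ψ : ℝ → ℝ) (J u : EuclideanSpace ℝ (Fin N) → ℝ) : ENNReal :=
  (1 / 2) * ∫⁻ x, ∫⁻ y, ENNReal.ofReal (Ψ (u x - u y) * J (x - y))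

/-- Interaction energy `ℰ(u;φ)` (real-valued). -/
def interE (N : ℕ) (ψ : ℝ → ℝ) (J u φ : EuclideanSpace ℝ (Fin N) → ℝ) : ℝ :=
  (1 / 2) * ∫ x, ∫ y, ψ (u x - u y) * (φ x - φ y) * J (x - y)

/-- Interaction energy `ℰ(u;φ)` (extended-nonnegative-valued version, for integrands
of constant sign). -/
def interEplus (N : ℕ) (ψ : ℝ → ℝ) (J u φ : EuclideanSpace ℝ (Fin N) → ℝ) : ENNReal :=
  (1 / 2) * ∫⁻ x, ∫⁻ y, ENNReal.ofReal (ψ (u x - u y) * (φ x - φ y) * J (x - y))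

/-- The space `W₀^{J,Ψ}(Ω)`. -/
def memW0 (N : ℕ) (Ψ : ℝ → ℝ) (J : EuclideanSpace ℝ (Fin N) → ℝ)
    (Ω : Set (EuclideanSpace ℝ (Fin N))) (u : EuclideanSpace ℝ (Fin N) → ℝ) : Prop :=
  Measurable u ∧ funcF N Ψ u < ⊤ ∧ funcE N Ψ J u < ⊤ ∧ ∀ᵐ x ∂volume, x ∉ Ω → u x = 0

/-- `γ⁻_g(s) = inf_{x>0} g(sx)/g(x)`. -/
def gammaLow (g : ℝ → ℝ) (s : ℝ) : ℝ := sInf {r : ℝ | ∃ x : ℝ, 0 < x ∧ r = g (s * x) / g x}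

/-- `γ⁺_g(s) = sup_{x>0} g(sx)/g(x)`. -/
def gammaHigh (g : ℝ → ℝ) (s : ℝ) : ℝ := sSup {r : ℝ | ∃ x : ℝ, 0 < x ∧ r = g (s * x) / g x}


section auxlem

variable {p q δ : ℝ} {Ψ : ℝ → ℝ}
variable (hq : 1 < q) (hpq : q ≤ p)
variable (hconv : ConvexOn ℝ Set.univ Ψ) (heven : ∀ s, Ψ (-s) = Ψ s)
variable (hcd : ContDiff ℝ 1 Ψ) (hnn : ∀ s, 0 ≤ Ψ s) (h0 : Ψ 0 = 0)
variable (hratio : ∀ s : ℝ, s ≠ 0 → q ≤ s * deriv Ψ s / Ψ s ∧ s * deriv Ψ s / Ψ s ≤ p)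

include hq hnn hratio in
lemma Psi_pos {s : ℝ} (hs : s ≠ 0) : 0 < Ψ s := by
  rcases (hnn s).lt_or_eq with h | h
  · exact h
  · exfalso
    have := (hratio s hs).1
    rw [← h, div_zero] at this
    linarith

include hq hnn hratio in
lemma Psi_low {s : ℝ} (hs : s ≠ 0) : q * Ψ s ≤ s * deriv Ψ s :=
  (le_div_iff₀ (Psi_pos hq hnn hratio hs)).mp (hratio s hs).1

include hq hnn hratio in
lemma Psi_high {s : ℝ} (hs : s ≠ 0) : s * deriv Ψ s ≤ p * Ψ s :=
  (div_le_iff₀ (Psi_pos hq hnn hratio hs)).mp (hratio s hs).2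

include hq hnn hratio in
lemma psi_pos {s : ℝ} (hs : 0 < s) : 0 < deriv Ψ s := by
  have h1 : 0 < q * Ψ s := mul_pos (by linarith) (Psi_pos hq hnn hratio hs.ne')
  have h2 := Psi_low hq hnn hratio hs.ne'
  nlinarith

include hq hnn hratio in
lemma psi_submult (hδdef : δ = sInf {r : ℝ | ∃ s : ℝ, 0 < s ∧ r = deriv Ψ s / gammaHigh (deriv Ψ) s})
    (hδ : 0 < δ) {s x : ℝ} (hs : 0 < s) (hx : 0 < x) :
    δ * deriv Ψ (s * x) ≤ deriv Ψ s * deriv Ψ x := by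
  have hDbdd : BddBelow {r : ℝ | ∃ s : ℝ, 0 < s ∧ r = deriv Ψ s / gammaHigh (deriv Ψ) s} := by
    by_contra h
    rw [hδdef, Real.sInf_of_not_bddBelow h] at hδ
    exact lt_irrefl 0 hδ
  have hδle : δ ≤ deriv Ψ s / gammaHigh (deriv Ψ) s := by
    rw [hδdef]; exact csInf_le hDbdd ⟨s, hs, rfl⟩
  have hG0 : 0 < gammaHigh (deriv Ψ) s := by
    by_contra h
    push_neg at h
    have : deriv Ψ s / gammaHigh (deriv Ψ) s ≤ 0 :=
      div_nonpos_of_nonneg_of_nonpos (psi_pos hq hnn hratio hs).le h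
    linarith
  have hSbdd : BddAbove {r : ℝ | ∃ x : ℝ, 0 < x ∧ r = deriv Ψ (s * x) / deriv Ψ x} := by
    by_contra h
    have : gammaHigh (deriv Ψ) s = 0 := Real.sSup_of_not_bddAbove h
    linarith
  have hmem : deriv Ψ (s * x) / deriv Ψ x ≤ gammaHigh (deriv Ψ) s :=
    le_csSup hSbdd ⟨x, hx, rfl⟩
  have hψx := psi_pos hq hnn hratio hx
  have h1 : deriv Ψ (s * x) ≤ gammaHigh (deriv Ψ) s * deriv Ψ x := (div_le_iff₀ hψx).mp hmem
  have h2 : δ * gammaHigh (deriv Ψ) s ≤ deriv Ψ s := (le_div_iff₀ hG0).mp hδle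
  nlinarith

include hq hpq heven hnn h0 hratio in
lemma pt_bound (hδdef : δ = sInf {r : ℝ | ∃ s : ℝ, 0 < s ∧ r = deriv Ψ s / gammaHigh (deriv Ψ) s})
    (hδ : 0 < δ) {h : ℝ} (hh : 0 < h) (t : ℝ) :
    q * δ * Ψ (h * t) ≤ p * (h * deriv Ψ h * Ψ t) := by
  rcases eq_or_ne t 0 with rfl | ht
  · simp only [mul_zero, h0]
    nlinarith [mul_pos hh (psi_pos hq hnn hratio hh), hnn (0:ℝ)]
  · have ht' : 0 < |t| := abs_pos.mpr ht
    have hΨht : Ψ (h * t) = Ψ (h * |t|) := by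
      rcases abs_choice t with hc | hc
      · rw [hc]
      · rw [hc, mul_neg, heven]
    have hΨt : Ψ t = Ψ |t| := by
      rcases abs_choice t with hc | hc
      · rw [hc]
      · rw [hc, heven]
    rw [hΨht, hΨt]
    have hht : (0:ℝ) < h * |t| := mul_pos hh ht'
    have f1 : q * Ψ (h * |t|) ≤ (h * |t|) * deriv Ψ (h * |t|) := Psi_low hq hnn hratio hht.ne'
    have f2 : δ * deriv Ψ (h * |t|) ≤ deriv Ψ h * deriv Ψ |t| :=
      psi_submult hq hnn hratio hδdef hδ hh ht'
    have f3 : |t| * deriv Ψ |t| ≤ p * Ψ |t| := Psi_high hq hnn hratio ht'.ne'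
    have hψh := psi_pos hq hnn hratio hh
    have hψt := psi_pos hq hnn hratio ht'
    have hΨnn := hnn |t|
    have hΨhnn := hnn (h * |t|)
    nlinarith [mul_le_mul_of_nonneg_left f1 hδ.le, mul_le_mul_of_nonneg_left f2 hht.le,
      mul_le_mul_of_nonneg_left f3 (mul_pos hh hψh).le]

end auxlem

section keylem

variable {p q δ : ℝ} {Ψ A G : ℝ → ℝ}

lemma key_main (hq : 1 < q) (hpq : q ≤ p)
    (hconv : ConvexOn ℝ Set.univ Ψ) (heven : ∀ s, Ψ (-s) = Ψ s)
    (hcd : ContDiff ℝ 1 Ψ) (hnn : ∀ s, 0 ≤ Ψ s) (h0 : Ψ 0 = 0)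
    (hratio : ∀ s : ℝ, s ≠ 0 → q ≤ s * deriv Ψ s / Ψ s ∧ s * deriv Ψ s / Ψ s ≤ p)
    (hδdef : δ = sInf {r : ℝ | ∃ s : ℝ, 0 < s ∧ r = deriv Ψ s / gammaHigh (deriv Ψ) s})
    (hδ : 0 < δ)
    (hA : ContDiff ℝ 1 A) (hG : ContDiff ℝ 1 G)
    (hGA : ∀ s : ℝ, Ψ (deriv A s) ≤ deriv G s)
    {a b : ℝ} (hba : b < a) :
    δ * q / p * Ψ (A a - A b) ≤ deriv Ψ (a - b) * (G a - G b) := by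
  have hp0 : (0:ℝ) < p := by linarith
  have hq0 : (0:ℝ) < q := by linarith
  have hh : (0:ℝ) < a - b := by linarith
  have hA' : Continuous (deriv A) := hA.continuous_deriv le_rfl
  have hG' : Continuous (deriv G) := hG.continuous_deriv le_rfl
  have hΨc : Continuous Ψ := hcd.continuous
  have hψh : 0 < deriv Ψ (a - b) := psi_pos hq hnn hratio hh
  -- FTC
  have hftcA : ∫ s in Set.Ioc b a, deriv A s = A a - A b := by
    rw [← intervalIntegral.integral_of_le hba.le]
    exact intervalIntegral.integral_deriv_eq_sub
      (fun x _ => (hA.differentiable one_ne_zero).differentiableAt) (hA'.intervalIntegrable b a)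
  have hftcG : ∫ s in Set.Ioc b a, deriv G s = G a - G b := by
    rw [← intervalIntegral.integral_of_le hba.le]
    exact intervalIntegral.integral_deriv_eq_sub
      (fun x _ => (hG.differentiable one_ne_zero).differentiableAt) (hG'.intervalIntegrable b a)
  -- Jensen
  set μ : Measure ℝ := volume.restrict (Set.Ioc b a) with hμdef
  haveI : IsFiniteMeasure μ := by
    constructor
    rw [hμdef, Measure.restrict_apply_univ, Real.volume_Ioc]
    exact ENNReal.ofReal_lt_top
  haveI : NeZero μ := by
    constructor
    intro hzero
    have : μ Set.univ = 0 := by rw [hzero]; rfl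
    rw [hμdef, Measure.restrict_apply_univ, Real.volume_Ioc] at this
    rw [ENNReal.ofReal_eq_zero] at this
    linarith
  have hμuniv : (μ Set.univ).toReal = a - b := by
    rw [hμdef, Measure.restrict_apply_univ, Real.volume_Ioc, ENNReal.toReal_ofReal hh.le]
  set f : ℝ → ℝ := fun s => (a - b) * deriv A s with hfdef
  have hfc : Continuous f := continuous_const.mul hA'
  have hfi : Integrable f μ := hfc.integrableOn_Ioc
  have hgi : Integrable (Ψ ∘ f) μ := (hΨc.comp hfc).integrableOn_Ioc
  have hjensen := hconv.map_average_le hΨc.continuousOn isClosed_univ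
    (Filter.Eventually.of_forall fun x => Set.mem_univ (f x)) hfi hgi
  have havgf : ⨍ x, f x ∂μ = A a - A b := by
    rw [average_eq, measureReal_def, hμuniv, smul_eq_mul, hfdef]
    simp only
    rw [integral_const_mul, hftcA, ← mul_assoc, inv_mul_cancel₀ hh.ne', one_mul]
  set I₁ : ℝ := ∫ x, Ψ (f x) ∂μ with hI1
  set I₂ : ℝ := ∫ x in Set.Ioc b a, Ψ (deriv A x) with hI2
  have hJ' : Ψ (A a - A b) ≤ (a - b)⁻¹ * I₁ := by
    have := hjensen
    rw [havgf, average_eq, measureReal_def, hμuniv, smul_eq_mul] at this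
    exact this
  -- pointwise bound integrated
  have hP : q * δ * I₁ ≤ p * ((a - b) * deriv Ψ (a - b)) * I₂ := by
    have hint1 : Integrable (fun x => q * δ * Ψ (f x)) μ :=
      (Integrable.const_mul hgi _)
    have hint2 : Integrable (fun x => p * ((a - b) * deriv Ψ (a - b)) * Ψ (deriv A x)) μ :=
      Integrable.const_mul ((hΨc.comp hA').integrableOn_Ioc) _
    have hmono : (fun x => q * δ * Ψ (f x)) ≤
        fun x => p * ((a - b) * deriv Ψ (a - b)) * Ψ (deriv A x) := by
      intro x
      have := pt_bound hq hpq heven hnn h0 hratio hδdef hδ hh (deriv A x)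
      simp only [hfdef]
      nlinarith
    have := integral_mono hint1 hint2 hmono
    rwa [integral_const_mul, integral_const_mul, ← hI1] at this
  have hM : I₂ ≤ G a - G b := by
    rw [← hftcG, hI2]
    exact integral_mono ((hΨc.comp hA').integrableOn_Ioc) (hG'.integrableOn_Ioc)
      fun x => hGA x
  -- combine
  rw [div_mul_eq_mul_div, div_le_iff₀ hp0]
  have e1 : q * δ * Ψ (A a - A b) ≤ q * δ * ((a - b)⁻¹ * I₁) :=
    mul_le_mul_of_nonneg_left hJ' (by positivity)
  have e2 : (a - b)⁻¹ * (q * δ * I₁) ≤ (a - b)⁻¹ * (p * ((a - b) * deriv Ψ (a - b)) * I₂) :=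
    mul_le_mul_of_nonneg_left hP (by positivity)
  have e3 : (a - b)⁻¹ * (p * ((a - b) * deriv Ψ (a - b)) * I₂) = p * deriv Ψ (a - b) * I₂ := by
    field_simp
  have e4 : p * deriv Ψ (a - b) * I₂ ≤ p * deriv Ψ (a - b) * (G a - G b) :=
    mul_le_mul_of_nonneg_left hM (by positivity)
  nlinarith [e1, e2, e3, e4]

end keylem

section final

variable {p q δ : ℝ} {Ψ A G : ℝ → ℝ}

lemma key_all (hq : 1 < q) (hpq : q ≤ p)
    (hconv : ConvexOn ℝ Set.univ Ψ) (heven : ∀ s, Ψ (-s) = Ψ s)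
    (hcd : ContDiff ℝ 1 Ψ) (hnn : ∀ s, 0 ≤ Ψ s) (h0 : Ψ 0 = 0)
    (hratio : ∀ s : ℝ, s ≠ 0 → q ≤ s * deriv Ψ s / Ψ s ∧ s * deriv Ψ s / Ψ s ≤ p)
    (hδdef : δ = sInf {r : ℝ | ∃ s : ℝ, 0 < s ∧ r = deriv Ψ s / gammaHigh (deriv Ψ) s})
    (hδ : 0 < δ)
    (hA : ContDiff ℝ 1 A) (hG : ContDiff ℝ 1 G)
    (hGA : ∀ s : ℝ, Ψ (deriv A s) ≤ deriv G s)
    (a b : ℝ) :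
    δ * q / p * Ψ (A a - A b) ≤ deriv Ψ (a - b) * (G a - G b) := by
  have hodd : ∀ s : ℝ, deriv Ψ (-s) = -deriv Ψ s := by
    intro s
    have : (fun x => Ψ (-x)) = Ψ := funext fun x => heven x
    have h1 : deriv (fun x => Ψ (-x)) s = -deriv Ψ (-s) := deriv_comp_neg Ψ s
    rw [this] at h1
    linarith
  rcases lt_trichotomy b a with hba | rfl | hab
  · exact key_main hq hpq hconv heven hcd hnn h0 hratio hδdef hδ hA hG hGA hba
  · have hψ0 : deriv Ψ (0:ℝ) = 0 := by
      have := hodd 0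
      simp at this
      linarith [this]
    simp [h0, hψ0]
  · have := key_main hq hpq hconv heven hcd hnn h0 hratio hδdef hδ hA hG hGA hab
    have h1 : Ψ (A a - A b) = Ψ (A b - A a) := by
      rw [← heven (A b - A a)]; ring_nf
    have h2 : deriv Ψ (a - b) = -deriv Ψ (b - a) := by
      rw [← hodd (b - a)]; ring_nf
    rw [h1, h2]
    nlinarith
end final

theorem stmt5X (N : ℕ) (q₀ : ℝ) (J : EuclideanSpace ℝ (Fin N) → ℝ)
    (hJpos : ∀ z : EuclideanSpace ℝ (Fin N), z ≠ 0 → 0 < J z)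
    (p q : ℝ) (hq : 1 < q) (hpq : q ≤ p) (Ψ : ℝ → ℝ)
    (hconv : ConvexOn ℝ Set.univ Ψ) (heven : ∀ s, Ψ (-s) = Ψ s)
    (hcd : ContDiff ℝ 1 Ψ) (hnn : ∀ s, 0 ≤ Ψ s) (h0 : Ψ 0 = 0)
    (hratio : ∀ s : ℝ, s ≠ 0 → q ≤ s * deriv Ψ s / Ψ s ∧ s * deriv Ψ s / Ψ s ≤ p)
    (δ : ℝ)
    (hδdef : δ = sInf {r : ℝ | ∃ s : ℝ, 0 < s ∧ r = deriv Ψ s / gammaHigh (deriv Ψ) s})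
    (hδ : 0 < δ)
    (A G : ℝ → ℝ) (hA : ContDiff ℝ 1 A) (hG : ContDiff ℝ 1 G)
    (hGA : ∀ s : ℝ, Ψ (deriv A s) ≤ deriv G s)
    (u : EuclideanSpace ℝ (Fin N) → ℝ) :
    ENNReal.ofReal (δ * q / p) *
        ((1 / 2 : ENNReal) * ∫⁻ x, ∫⁻ y, ENNReal.ofReal (Ψ (A (u x) - A (u y)) * J (x - y))) ≤
      (1 / 2 : ENNReal) * ∫⁻ x, ∫⁻ y,
        ENNReal.ofReal (deriv Ψ (u x - u y) * (G (u x) - G (u y)) * J (x - y)) := by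
  have hkey := key_all hq hpq hconv heven hcd hnn h0 hratio hδdef hδ hA hG hGA
  have hp0 : (0:ℝ) < p := by linarith
  have hc : (0:ℝ) ≤ δ * q / p := by positivity
  have hpt : ∀ x y : EuclideanSpace ℝ (Fin N),
      ENNReal.ofReal (δ * q / p) * ENNReal.ofReal (Ψ (A (u x) - A (u y)) * J (x - y)) ≤
        ENNReal.ofReal (deriv Ψ (u x - u y) * (G (u x) - G (u y)) * J (x - y)) := by
    intro x y
    rcases eq_or_ne x y with rfl | hxy
    · simp [sub_self, h0]
    · have hJnn : 0 ≤ J (x - y) := (hJpos (x - y) (sub_ne_zero.mpr hxy)).le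
      rw [← ENNReal.ofReal_mul hc]
      apply ENNReal.ofReal_le_ofReal
      have hk := hkey (u x) (u y)
      nlinarith [mul_le_mul_of_nonneg_right hk hJnn]
  rw [← mul_assoc, mul_comm (ENNReal.ofReal (δ * q / p)) (1 / 2 : ENNReal), mul_assoc]
  refine mul_le_mul_right ?_ _
  rw [← lintegral_const_mul' _ _ ENNReal.ofReal_ne_top]
  refine lintegral_mono fun x => ?_
  rw [← lintegral_const_mul' _ _ ENNReal.ofReal_ne_top]
  exact lintegral_mono fun y => hpt x y

theorem stmt5 (N : ℕ) (q₀ : ℝ) (J : EuclideanSpace ℝ (Fin N) → ℝ) (hJ : kernelH0 N J q₀)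
    (p q : ℝ) (hq : 1 < q) (hpq : q ≤ p) (Ψ : ℝ → ℝ) (hΨ : memGamma Ψ p q)
    (δ : ℝ)
    (hδdef : δ = sInf {r : ℝ | ∃ s : ℝ, 0 < s ∧ r = deriv Ψ s / gammaHigh (deriv Ψ) s})
    (hδ : 0 < δ)
    (A G : ℝ → ℝ) (hA : ContDiff ℝ 1 A) (hG : ContDiff ℝ 1 G)
    (hGA : ∀ s : ℝ, Ψ (deriv A s) ≤ deriv G s)
    (u : EuclideanSpace ℝ (Fin N) → ℝ) (hu : Measurable u) :
    ENNReal.ofReal (δ * q / p) * funcE N Ψ J (fun x => A (u x)) ≤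
      interEplus N (deriv Ψ) J u (fun x => G (u x)) := by
  obtain ⟨hmeas, hJpos, _⟩ := hJ
  obtain ⟨hconv, heven, hcd, hnn, h0, h1, hratio⟩ := hΨ
  exact stmt5X N q₀ J hJpos p q hq hpq Ψ hconv heven hcd hnn h0 hratio δ hδdef hδ A G hA hG hGA u
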